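/- max over x ∈ [0,1] of |T₄(x)| equals 1/5760, where T₄(x) = x²(x-1/3)(x-3/5)/24 for x ∈ [0,1/2) and T₄(x) = (x-1)²(x-2/3)(x-2/5)/24 for x ∈ [1/2,1]. -/
import Mathlib


theorem T4_abs_max :
    IsGreatest ((fun x : ℝ =>
      |if x < 1/2 then x ^ 2 * (x - 1/3) * (x - 3/5) / 24
        else (x - 1) ^ 2 * (x - 2/3) * (x - 2/5) / 24|) '' Set.Icc 0 1) (1 / 5760) := by
  constructor
  · refine ⟨1/2, by norm_num, ?_⟩
    simp only [lt_irrefl, if_neg, lt_self_iff_false, if_false]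
    rw [abs_of_nonpos (by norm_num)]
    norm_num
  · rintro y ⟨x, ⟨hx0, hx1⟩, rfl⟩
    simp only
    split_ifs with h
    · rw [abs_le]
      constructor
      · nlinarith [sq_nonneg (x - 1/2), sq_nonneg x, sq_nonneg (x + 1/30),
          mul_nonneg (sq_nonneg (x - 1/2)) (sq_nonneg (x + 1/30))]
      · nlinarith [sq_nonneg (x - 1/5),
          mul_nonneg (sq_nonneg (x - 1/5)) (mul_nonneg hx0 (by linarith : (0:ℝ) ≤ 1/2 - x))]
    · push_neg at h
      rw [abs_le]
      constructor
      · nlinarith [sq_nonneg (x - 1/2), sq_nonneg (1 - x), sq_nonneg (x - 31/30),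
          mul_nonneg (sq_nonneg (x - 1/2)) (sq_nonneg (x - 31/30))]
      · nlinarith [sq_nonneg (x - 4/5),
          mul_nonneg (sq_nonneg (x - 4/5)) (mul_nonneg (by linarith : (0:ℝ) ≤ 1 - x) (by linarith : (0:ℝ) ≤ x - 1/2))]
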